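/- Let f : Y → X and g : Z → Y be covering maps, and assume that for every x ∈ X the fiber f⁻¹(x) is finite. Then the composition f ∘ g : Z → X is a covering map. -/

import Mathlib

open Set Topology


/-- The composition of two covering maps is a covering map, provided the first one has
finite fibres. -/
theorem isCoveringMap_comp {X Y Z : Type*} [TopologicalSpace X] [TopologicalSpace Y]
    [TopologicalSpace Z] {f : Y → X} {g : Z → Y}
    (hf : IsCoveringMap f) (hg : IsCoveringMap g)
    (hfin : ∀ x : X, (f ⁻¹' {x}).Finite) :
    IsCoveringMap (f ∘ g) := by
  intro x
  rcases isEmpty_or_nonempty (f ⁻¹' {x}) with hemp | hne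
  · obtain ⟨-, U, hxU, hU, -, H, -⟩ := hf x
    have hfU : f ⁻¹' U = ∅ :=
      eq_empty_of_forall_notMem fun y hy => (IsEmpty.false (H ⟨y, hy⟩).2).elim
    haveI : IsEmpty ((f ∘ g) ⁻¹' {x}) := ⟨fun z => IsEmpty.false (⟨g z.1, z.2⟩ : f ⁻¹' {x})⟩
    exact .of_preimage_eq_empty _ (hU.mem_nhds hxU) (by rw [preimage_comp, hfU, preimage_empty])
  set e := (hf x).toTrivialization with he
  have hx : x ∈ e.baseSet := (hf x).mem_toTrivialization_baseSet
  haveI : DiscreteTopology (f ⁻¹' {x}) := (hf x).1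
  haveI : Finite (f ⁻¹' {x}) := (hfin x).to_subtype
  -- the section through sheet i
  set σ : f ⁻¹' {x} → X → Y := fun i u => e.toOpenPartialHomeomorph.symm (u, i) with hσ
  have hσc : ∀ i, ContinuousOn (σ i) e.baseSet := by
    intro i
    have h1 := e.toOpenPartialHomeomorph.continuousOn_symm
    rw [e.target_eq] at h1
    exact h1.comp (Continuous.continuousOn (by fun_prop)) fun u hu => ⟨hu, trivial⟩
  -- evenly covered neighbourhoods for g over each point of the fiber over x
  set V : f ⁻¹' {x} → Set Y := fun i => (hg (σ i x)).2.choose with hV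
  have hVo : ∀ i, IsOpen (V i) := fun i => (hg (σ i x)).2.choose_spec.2.1
  have hVx : ∀ i, σ i x ∈ V i := fun i => (hg (σ i x)).2.choose_spec.1
  have hVne : ∀ i z, g z ∈ V i → Nonempty (g ⁻¹' {σ i x}) := by
    intro i z hz
    obtain ⟨H, -⟩ := (hg (σ i x)).2.choose_spec.2.2.2
    exact ⟨(H ⟨z, hz⟩).2⟩
  set S := {i : f ⁻¹' {x} // Nonempty (g ⁻¹' {σ i x})} with hS
  set t : ∀ s : S, Bundle.Trivialization (g ⁻¹' {σ s.1 x}) g :=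
    fun s => haveI := s.2; (hg (σ s.1 x)).toTrivialization with ht
  have htb : ∀ s : S, (t s).baseSet = V s.1 := fun s => rfl
  haveI hdF : ∀ s : S, DiscreteTopology (g ⁻¹' {σ s.1 x}) := fun s => (hg (σ s.1 x)).1
  set F := Σ s : S, g ⁻¹' {σ s.1 x} with hF
  haveI : DiscreteTopology F := Sigma.discreteTopology
  set W : Set X := e.baseSet ∩ ⋂ i : f ⁻¹' {x}, {u ∈ e.baseSet | σ i u ∈ V i}
    with hW
  have hWsub : W ⊆ e.baseSet := inter_subset_left
  have hWσ : ∀ (i) (u), u ∈ W → σ i u ∈ V i := fun i u hu =>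
    ((mem_iInter.1 hu.2) i).2
  have hWopen : IsOpen W := by
    refine e.open_baseSet.inter (isOpen_iInter_of_finite fun i => ?_)
    exact (hσc i).isOpen_inter_preimage e.open_baseSet (hVo i)
  have hxW : x ∈ W := ⟨hx, mem_iInter.2 fun i => ⟨hx, hVx i⟩⟩
  -- index maps
  set idx : Z → f ⁻¹' {x} := fun z => (e (g z)).2 with hidx
  -- basic facts for z in the source
  have key : ∀ z, f (g z) ∈ W → g z ∈ e.source ∧ g z = σ (idx z) (f (g z)) ∧
      g z ∈ V (idx z) := by
    intro z hz
    have h1 : g z ∈ e.source := e.mem_source.2 (hWsub hz)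
    have h2 : e (g z) = (f (g z), idx z) := (e.mk_proj_snd h1).symm
    have h3 : g z = σ (idx z) (f (g z)) := by
      have h4 := e.toOpenPartialHomeomorph.left_inv h1
      rw [show e.toOpenPartialHomeomorph (g z) = (f (g z), idx z) from h2] at h4
      exact h4.symm
    exact ⟨h1, h3, h3 ▸ hWσ _ _ hz⟩
  have hidxS : ∀ z, f (g z) ∈ W → Nonempty (g ⁻¹' {σ (idx z) x}) :=
    fun z hz => hVne _ z (key z hz).2.2
  -- facts for points of the target
  have key2 : ∀ (u : X) (s : F), u ∈ W →
      g ((t s.1).toOpenPartialHomeomorph.symm (σ s.1.1 u, s.2)) = σ s.1.1 u ∧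
      f (σ s.1.1 u) = u ∧ e (σ s.1.1 u) = (u, s.1.1) := by
    intro u s hu
    have hb : σ s.1.1 u ∈ (t s.1).baseSet := hWσ _ _ hu
    refine ⟨(t s.1).proj_symm_apply ((t s.1).mem_target.2 hb), ?_, ?_⟩
    · exact e.proj_symm_apply (e.mem_target.2 (hWsub hu))
    · exact e.apply_symm_apply (e.mem_target.2 (hWsub hu))
  set Ψ : X × F → Z := fun p => (t p.2.1).toOpenPartialHomeomorph.symm (σ p.2.1.1 p.1, p.2.2)
    with hΨ
  have hΨW : ∀ p : W × F, f (g (Ψ (p.1.1, p.2))) ∈ W := by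
    rintro ⟨⟨u, hu⟩, s⟩
    have := key2 u s hu
    show f (g _) ∈ W
    rw [this.1, this.2.1]
    exact hu
  set Φ : (f ∘ g) ⁻¹' W → W × F := fun z =>
    (⟨f (g z.1), z.2⟩, ⟨⟨idx z.1, hidxS z.1 z.2⟩, ((t ⟨idx z.1, hidxS z.1 z.2⟩) z.1).2⟩) with hΦ
  let H : (f ∘ g) ⁻¹' W ≃ₜ W × F :=
    { toFun := Φ
      invFun := fun p => ⟨Ψ (p.1.1, p.2), hΨW p⟩
      left_inv := by
        rintro ⟨z, hz⟩
        apply Subtype.ext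
        obtain ⟨h1, h3, hb⟩ := key z hz
        set i : S := ⟨idx z, hidxS z hz⟩
        show (t i).toOpenPartialHomeomorph.symm (σ i.1 (f (g z)), ((t i) z).2) = z
        have hzs : z ∈ (t i).source := (t i).mem_source.2 hb
        have : (σ i.1 (f (g z)), ((t i) z).2) = (t i) z := by
          rw [← h3]
          exact (t i).mk_proj_snd hzs
        rw [this]
        exact (t i).toOpenPartialHomeomorph.left_inv hzs
      right_inv := by
        rintro ⟨⟨u, hu⟩, s⟩
        obtain ⟨h1, h2, h3⟩ := key2 u s hu
        set z := (t s.1).toOpenPartialHomeomorph.symm (σ s.1.1 u, s.2) with hz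
        have hfz : f (g z) = u := by rw [h1, h2]
        have hiz : idx z = s.1.1 := by
          show (e (g z)).2 = s.1.1
          rw [h1, h3]
        have hb : σ s.1.1 u ∈ (t s.1).baseSet := hWσ _ _ hu
        have htz : (t s.1) z = (σ s.1.1 u, s.2) :=
          (t s.1).apply_symm_apply ((t s.1).mem_target.2 hb)
        have hzW : f (g z) ∈ W := hfz ▸ hu
        have hiz' : (⟨idx z, hidxS z hzW⟩ : S) = s.1 := Subtype.ext hiz
        show ((⟨f (g z), hzW⟩ : W), (⟨⟨idx z, hidxS z hzW⟩, ((t ⟨idx z, hidxS z hzW⟩) z).2⟩ : F))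
          = (⟨u, hu⟩, s)
        refine Prod.ext (Subtype.ext hfz) ?_
        show (⟨⟨idx z, hidxS z hzW⟩, ((t ⟨idx z, hidxS z hzW⟩) z).2⟩ : F) = ⟨s.1, s.2⟩
        calc (⟨⟨idx z, hidxS z hzW⟩, ((t ⟨idx z, hidxS z hzW⟩) z).2⟩ : F)
              = ⟨s.1, ((t s.1) z).2⟩ :=
            congrArg (fun i : S => (⟨i, ((t i) z).2⟩ : F)) hiz'
          _ = ⟨s.1, s.2⟩ := by rw [htz]
      continuous_toFun := by
        refine Continuous.prodMk
          (((hf.continuous.comp hg.continuous).comp continuous_subtype_val).subtype_mk _) ?_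
        refine continuous_iff_continuousAt.2 fun z₀ => ?_
        obtain ⟨h1, h3, hb⟩ := key z₀.1 z₀.2
        set i₀ : S := ⟨idx z₀.1, hidxS z₀.1 z₀.2⟩
        set O : Set Z := (f ∘ g) ⁻¹' W ∩ g ⁻¹' (e.source ∩ (fun y => (e y).2) ⁻¹' {i₀.1}) ∩
          ((t i₀).source ∩ (fun z => ((t i₀) z).2) ⁻¹' {((t i₀) z₀.1).2})
        have hO : IsOpen O := by
          refine (IsOpen.inter (hWopen.preimage (hf.continuous.comp hg.continuous)) ?_).inter ?_
          · refine (e.toOpenPartialHomeomorph.continuousOn.snd.isOpen_inter_preimage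
              e.open_source (isOpen_discrete _)).preimage hg.continuous
          · exact (t i₀).toOpenPartialHomeomorph.continuousOn.snd.isOpen_inter_preimage
              (t i₀).open_source (isOpen_discrete _)
        have hz₀O : z₀.1 ∈ O := ⟨⟨z₀.2, h1, rfl⟩, (t i₀).mem_source.2 hb, rfl⟩
        have hconst : ∀ z : (f ∘ g) ⁻¹' W, z.1 ∈ O → (Φ z).2 = ⟨i₀, ((t i₀) z₀.1).2⟩ := by
          rintro z ⟨⟨-, -, hiz⟩, -, hjz⟩
          have h5 : (⟨idx z.1, hidxS z.1 z.2⟩ : S) = i₀ := Subtype.ext hiz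
          have h6 : ((t i₀) z.1).2 = ((t i₀) z₀.1).2 := hjz
          calc (Φ z).2 = ⟨⟨idx z.1, hidxS z.1 z.2⟩, ((t ⟨idx z.1, hidxS z.1 z.2⟩) z.1).2⟩ := rfl
            _ = ⟨i₀, ((t i₀) z.1).2⟩ :=
                congrArg (fun i : S => (⟨i, ((t i) z.1).2⟩ : F)) h5
            _ = ⟨i₀, ((t i₀) z₀.1).2⟩ := by rw [h6]
        have hev : (fun z => (Φ z).2) =ᶠ[nhds z₀] fun _ => (⟨i₀, ((t i₀) z₀.1).2⟩ : F) := by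
          filter_upwards [(hO.preimage continuous_subtype_val).mem_nhds hz₀O] with z hz
            using hconst z hz
        exact hev.continuousAt
      continuous_invFun := by
        refine continuous_prod_of_discrete_right.2 fun s₀ => ?_
        have hcont : ContinuousOn
            (fun u : X => (t s₀.1).toOpenPartialHomeomorph.symm (σ s₀.1.1 u, s₀.2)) W := by
          have hts := (t s₀.1).toOpenPartialHomeomorph.continuousOn_symm
          rw [(t s₀.1).target_eq] at hts
          refine hts.comp ?_ ?_
          · exact ContinuousOn.prodMk ((hσc s₀.1.1).mono hWsub) continuousOn_const
          · exact fun u hu => ⟨hWσ _ _ hu, trivial⟩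
        exact (hcont.comp_continuous continuous_subtype_val fun u => u.2).subtype_mk _ }
  exact IsEvenlyCovered.to_isEvenlyCovered_preimage (⟨inferInstance, W, hxW, hWopen, hWopen.preimage (hf.continuous.comp hg.continuous),
    H, fun z => rfl⟩ : IsEvenlyCovered (f ∘ g) x F)
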